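/- Let β_SR, β_RR, β_LI, β_SDn, β_RDn > 0, and let ρ_SR, ρ_SDn, ρ_RDn, ρ_LI, V be independent exponential random variables with means β_SR, β_SDn, β_RDn, β_LI, β_RR respectively; set ρ_RR = V². Let γ_c, γ_r > 0, δ ∈ (0,1], ω ∈ {0,1}, and 0 < a_n < a_f with a_n + a_f = 1, and let γ_thf, γ_thn > 0 satisfy a_f > a_n·γ_thf. With I = ρ_RR·δ·γ_r + ρ_LI·ω·γ_r + 1, define γ₁ = a_f·ρ_SR·γ_c/(a_n·ρ_SR·γ_c + I), γ₂ = a_n·ρ_SR·γ_c/I, γ₃ = a_f·ρ_SDn·γ_c/(a_n·ρ_SDn·γ_c + 1), γ₄ = a_n·ρ_SDn·γ_c, γ₅ = a_f·ρ_RDn·γ_r/(a_n·ρ_RDn·γ_r + 1), γ₆ = a_n·ρ_RDn·γ_r. Set θ₁ = γ_thf/((a_f − a_n·γ_thf)γ_c), θ₂ = γ_thn/(a_n·γ_c), θ = max(θ₁,θ₂), φ₁ = γ_thf/((a_f − a_n·γ_thf)γ_r), φ₂ = γ_thn/(a_n·γ_r), φ = max(φ₁,φ₂). Then P(min(γ₁/γ_thf,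 γ₂/γ_thn) < 1 and min(γ₃/γ_thf, γ₄/γ_thn) < 1) + P(min(γ₁/γ_thf, γ₂/γ_thn) ≥ 1 and min(γ₅/γ_thf, γ₆/γ_thn) < 1 and min(γ₃/γ_thf, γ₄/γ_thn) < 1) = (1 − exp(−θ/β_SDn)) · { 1 − [β_SR/(2β_RR(β_SR + β_LI·ω·γ_r·θ))] · √(πβ_SR/(δ·γ_r·θ)) · exp(β_SR/(4β_RR²·δ·γ_r·θ) − θ/β_SR − φ/β_RDn) · erfc((1/(2β_RR))·√(β_SR/(δ·γ_r·θ))) }, where erfc(z) = (2/√π)·∫_z^∞ exp(−t²) dt. -/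

import Mathlib

open MeasureTheory ProbabilityTheory Real

/-- The complementary error function `erfc(z) = (2/√π)·∫_z^∞ exp(−t²) dt`. -/
noncomputable def erfc (z : ℝ) : ℝ :=
  2 / Real.sqrt π * ∫ t in Set.Ioi z, Real.exp (-t ^ 2)

section Aux
open Set

lemma erfc_nonneg (z : ℝ) : 0 ≤ erfc z := by
  apply mul_nonneg
  · positivity
  · exact setIntegral_nonneg measurableSet_Ioi fun x _ => (Real.exp_pos _).le

lemma integral_Ioi_exp_neg_sq (z : ℝ) :
    ∫ t in Set.Ioi z, Real.exp (-t ^ 2) = Real.sqrt π / 2 * erfc z := by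
  have h : Real.sqrt π ≠ 0 := by positivity
  rw [erfc]; field_simp

lemma integral_Ioi_comp_add (f : ℝ → ℝ) (c a : ℝ) :
    ∫ x in Ioi c, f (x + a) = ∫ u in Ioi (c + a), f u := by
  have h := (measurableEmbedding_addRight a).setIntegral_map (μ := volume) f (Ioi (c+a))
  rw [map_add_right_eq_self, preimage_add_const_Ioi, add_sub_cancel_right] at h
  exact h.symm

lemma integral_R1 {r c : ℝ} (hr : 0 < r) (hc : 0 ≤ c) :
    ∫ x in Ioi (0:ℝ), r * Real.exp (-(r*x)) * Real.exp (-(c*x)) = r / (r + c) := by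
  have hrc : 0 < r + c := by linarith
  have h1 : ∀ x : ℝ, r * Real.exp (-(r*x)) * Real.exp (-(c*x))
      = r * Real.exp (-((r+c)*x)) := by
    intro x; rw [mul_assoc, ← Real.exp_add]; ring_nf
  simp_rw [h1]
  rw [integral_const_mul]
  have h2 : ∀ x : ℝ, Real.exp (-((r+c)*x)) = (fun y => Real.exp (-y)) ((r+c)*x) := fun _ => rfl
  rw [show (fun x => Real.exp (-((r+c)*x))) = (fun x => (fun y => Real.exp (-y)) ((r+c)*x)) from rfl]
  rw [integral_comp_mul_left_Ioi (fun y => Real.exp (-y)) 0 hrc]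
  rw [mul_zero, integral_exp_neg_Ioi_zero]
  simp [smul_eq_mul]
  field_simp

lemma integral_R2 {r c : ℝ} (hr : 0 < r) (hc : 0 < c) :
    ∫ x in Ioi (0:ℝ), r * Real.exp (-(r*x)) * Real.exp (-(c*x^2))
      = r * Real.exp (r^2/(4*c)) * (Real.sqrt π / (2 * Real.sqrt c))
          * erfc (r/(2*Real.sqrt c)) := by
  have hsc : 0 < Real.sqrt c := Real.sqrt_pos.2 hc
  have hcc : Real.sqrt c * Real.sqrt c = c := Real.mul_self_sqrt hc.le
  set a : ℝ := r/(2*c) with ha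
  have h1 : ∀ x : ℝ, r * Real.exp (-(r*x)) * Real.exp (-(c*x^2))
      = (r * Real.exp (r^2/(4*c))) * Real.exp (-(c*(x+a)^2)) := by
    intro x
    have hsq : c*(x+a)^2 = c*x^2 + r*x + r^2/(4*c) := by
      rw [ha]; field_simp; ring
    rw [mul_assoc, ← Real.exp_add, mul_assoc, ← Real.exp_add]
    congr 2
    linarith
  simp_rw [h1]
  rw [integral_const_mul]
  rw [show (fun x : ℝ => Real.exp (-(c*(x+a)^2))) = (fun x : ℝ => (fun u : ℝ => Real.exp (-(c*u^2))) (x + a)) from rfl]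
  rw [integral_Ioi_comp_add (fun u : ℝ => Real.exp (-(c*u^2))) 0 a, zero_add]
  have h2 : ∀ u : ℝ, Real.exp (-(c*u^2)) = (fun t : ℝ => Real.exp (-t^2)) (Real.sqrt c * u) := by
    intro u
    simp only
    rw [mul_pow, Real.sq_sqrt hc.le]
  rw [MeasureTheory.setIntegral_congr_fun measurableSet_Ioi (fun u _ => h2 u)]
  rw [integral_comp_mul_left_Ioi (fun t : ℝ => Real.exp (-t^2)) a hsc]
  rw [integral_Ioi_exp_neg_sq, smul_eq_mul]
  have h3 : Real.sqrt c * a = r/(2*Real.sqrt c) := by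
    rw [ha]; field_simp; nlinarith [hcc]
  rw [h3]
  field_simp

lemma expMeasure_apply {r : ℝ} {s : Set ℝ} (hs : MeasurableSet s) :
    expMeasure r s = ∫⁻ x in s, exponentialPDF r x := by
  rw [expMeasure, gammaMeasure, withDensity_apply _ hs]; rfl

lemma expMeasure_singleton {r x : ℝ} : expMeasure r {x} = 0 := by
  rw [expMeasure, gammaMeasure]
  exact (withDensity_absolutelyContinuous _ _) (measure_singleton x)

lemma expMeasure_Iio_zero {r : ℝ} : expMeasure r (Iio 0) = 0 := by
  rw [expMeasure_apply measurableSet_Iio]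
  exact lintegral_exponentialPDF_of_nonpos le_rfl

lemma expMeasure_Iio {r x : ℝ} (hr : 0 < r) (hx : 0 ≤ x) :
    expMeasure r (Iio x) = ENNReal.ofReal (1 - Real.exp (-(r*x))) := by
  have h : expMeasure r (Iic x) = ENNReal.ofReal (1 - Real.exp (-(r*x))) := by
    rw [expMeasure_apply measurableSet_Iic, lintegral_exponentialPDF_eq_antiDeriv hr, if_pos hx]
  have hd : Disjoint (Iio x) ({x} : Set ℝ) := by simp
  rw [← Iio_union_right, measure_union hd (measurableSet_singleton x),
    expMeasure_singleton, add_zero] at h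
  exact h

lemma expMeasure_Ici {r x : ℝ} (hr : 0 < r) (hx : 0 ≤ x) :
    expMeasure r (Ici x) = ENNReal.ofReal (Real.exp (-(r*x))) := by
  have : IsProbabilityMeasure (expMeasure r) := isProbabilityMeasure_expMeasure hr
  have h := measure_compl (μ := expMeasure r) measurableSet_Iio (measure_ne_top _ (Iio x))
  rw [compl_Iio] at h
  rw [h, measure_univ, expMeasure_Iio hr hx, ← ENNReal.ofReal_one, ← ENNReal.ofReal_sub]
  · norm_num
  · have := Real.exp_le_one_iff.2 (by nlinarith : -(r*x) ≤ 0)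
    linarith

lemma lintegral_expMeasure {r : ℝ} (hr : 0 < r) {f : ℝ → ℝ} (hf : Measurable f)
    (h0 : ∀ x, 0 ≤ f x) (h1 : ∀ x, 0 ≤ x → f x ≤ 1) :
    ∫⁻ x, ENNReal.ofReal (f x) ∂(expMeasure r)
      = ENNReal.ofReal (∫ x in Ioi 0, r * Real.exp (-(r*x)) * f x) := by
  have hbase : IntegrableOn (fun x => r * Real.exp (-r*x)) (Ioi 0) :=
    (exp_neg_integrableOn_Ioi 0 hr).const_mul r
  have hmeas : Measurable (fun x => r * Real.exp (-(r*x)) * f x) := by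
    exact (((measurable_const.mul ((measurable_const.mul measurable_id).neg.exp))).mul hf)
  have hint : IntegrableOn (fun x => r * Real.exp (-(r*x)) * f x) (Ioi 0) := by
    apply Integrable.mono hbase hmeas.aestronglyMeasurable
    filter_upwards [self_mem_ae_restrict measurableSet_Ioi] with x hx
    have hx0 : (0:ℝ) ≤ x := (le_of_lt hx)
    have h2 := h1 x hx0
    have h3 := h0 x
    have he : (0:ℝ) < Real.exp (-(r*x)) := Real.exp_pos _
    rw [Real.norm_eq_abs, Real.norm_eq_abs, neg_mul,
      abs_of_nonneg (by positivity), abs_of_nonneg (by positivity)]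
    nlinarith [mul_nonneg (mul_pos hr he).le (sub_nonneg.2 h2)]
  have hpdf : Measurable (gammaPDF 1 r) := (measurable_gammaPDFReal 1 r).ennreal_ofReal
  rw [expMeasure, gammaMeasure,
    lintegral_withDensity_eq_lintegral_mul _ hpdf (hf.ennreal_ofReal)]
  simp only [Pi.mul_apply]
  have hsplit := lintegral_add_compl (μ := volume)
    (fun x => (exponentialPDF r x) * ENNReal.ofReal (f x)) (measurableSet_Ioi (a := (0:ℝ)))
  rw [compl_Ioi] at hsplit
  have hzero : ∫⁻ x in Iic (0:ℝ), (exponentialPDF r x) * ENNReal.ofReal (f x) = 0 := by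
    rw [← setLIntegral_congr Iio_ae_eq_Iic]
    rw [setLIntegral_congr_fun measurableSet_Iio
      (fun x (hx : x < 0) => by rw [exponentialPDF_of_neg hx, zero_mul])]
    simp
  have hmain : ∫⁻ x in Ioi (0:ℝ), (exponentialPDF r x) * ENNReal.ofReal (f x)
      = ∫⁻ x in Ioi (0:ℝ), ENNReal.ofReal (r * Real.exp (-(r*x)) * f x) := by
    apply setLIntegral_congr_fun measurableSet_Ioi
    intro x hx
    dsimp only
    rw [exponentialPDF_of_nonneg (le_of_lt hx), ← ENNReal.ofReal_mul (by positivity)]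
  calc ∫⁻ x, (exponentialPDF r x) * ENNReal.ofReal (f x) ∂volume
      = (∫⁻ x in Ioi (0:ℝ), (exponentialPDF r x) * ENNReal.ofReal (f x))
        + ∫⁻ x in Iic (0:ℝ), (exponentialPDF r x) * ENNReal.ofReal (f x) := hsplit.symm
    _ = ∫⁻ x in Ioi (0:ℝ), ENNReal.ofReal (r * Real.exp (-(r*x)) * f x) := by
          rw [hzero, add_zero, hmain]
    _ = ENNReal.ofReal (∫ x in Ioi 0, r * Real.exp (-(r*x)) * f x) := by
          rw [← ofReal_integral_eq_lintegral_ofReal hint]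
          filter_upwards [self_mem_ae_restrict measurableSet_Ioi] with x hx
          have := h0 x
          positivity

lemma lint_exp_lin {r c : ℝ} (hr : 0 < r) (hc : 0 ≤ c) :
    ∫⁻ x, ENNReal.ofReal (Real.exp (-(c*x))) ∂(expMeasure r) = ENNReal.ofReal (r/(r+c)) := by
  rw [lintegral_expMeasure hr (by fun_prop) (fun x => (Real.exp_pos _).le)
    (fun x hx => Real.exp_le_one_iff.2 (by nlinarith)), integral_R1 hr hc]

lemma lint_exp_sq {r c : ℝ} (hr : 0 < r) (hc : 0 < c) :
    ∫⁻ x, ENNReal.ofReal (Real.exp (-(c*x^2))) ∂(expMeasure r)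
      = ENNReal.ofReal (r * Real.exp (r^2/(4*c)) * (Real.sqrt π / (2 * Real.sqrt c))
          * erfc (r/(2*Real.sqrt c))) := by
  rw [lintegral_expMeasure hr (by fun_prop) (fun x => (Real.exp_pos _).le)
    (fun x hx => Real.exp_le_one_iff.2 (by nlinarith)), integral_R2 hr hc]

lemma outage_iff {γ γthf γthn an af : ℝ} (hγ : 0 < γ) (han : 0 < an)
    (hγthf : 0 < γthf) (hγthn : 0 < γthn) (hdec : 0 < af - an * γthf)
    {s I : ℝ} (hs : 0 ≤ s) (hI : 0 < I) :
    (min (af * s * γ / (an * s * γ + I) / γthf) (an * s * γ / I / γthn) < 1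
      ↔ s < max (γthf / ((af - an * γthf) * γ)) (γthn / (an * γ)) * I) := by
  have hD : 0 < an * s * γ + I := by nlinarith [mul_nonneg (mul_nonneg han.le hs) hγ.le]
  have hθγ : 0 < (af - an * γthf) * γ := by nlinarith
  have hA : af * s * γ / (an * s * γ + I) / γthf < 1
      ↔ s < γthf / ((af - an * γthf) * γ) * I := by
    rw [div_lt_one hγthf, div_lt_iff₀ hD,
      show γthf / ((af - an * γthf) * γ) * I = (γthf * I) / ((af - an * γthf) * γ) by ring,
      lt_div_iff₀ hθγ]
    constructor <;> intro h <;> nlinarith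
  have hB : an * s * γ / I / γthn < 1 ↔ s < γthn / (an * γ) * I := by
    rw [div_lt_one hγthn, div_lt_iff₀ hI,
      show γthn / (an * γ) * I = (γthn * I) / (an * γ) by ring, lt_div_iff₀ (by positivity)]
    constructor <;> intro h <;> nlinarith
  rw [min_lt_iff, hA, hB, max_mul_of_nonneg _ _ hI.le, lt_max_iff]


end Aux

section Main
open Set
set_option maxHeartbeats 3000000 in
/-- **Theorem 2: exact outage probability of the near IoT device `D_n`.** -/
theorem outage_probability_near_device
    {Ω : Type*} [MeasurableSpace Ω] (P : Measure Ω) [IsProbabilityMeasure P]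
    (βSR βRR βLI βSDn βRDn : ℝ)
    (hβSR : 0 < βSR) (hβRR : 0 < βRR) (hβLI : 0 < βLI) (hβSDn : 0 < βSDn) (hβRDn : 0 < βRDn)
    (rSR rSDn rRDn rLI V : Ω → ℝ)
    (hrSR : Measurable rSR) (hrSDn : Measurable rSDn) (hrRDn : Measurable rRDn)
    (hrLI : Measurable rLI) (hV : Measurable V)
    (hlawSR : Measure.map rSR P = expMeasure (1 / βSR))
    (hlawSDn : Measure.map rSDn P = expMeasure (1 / βSDn))
    (hlawRDn : Measure.map rRDn P = expMeasure (1 / βRDn))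
    (hlawLI : Measure.map rLI P = expMeasure (1 / βLI))
    (hlawV : Measure.map V P = expMeasure (1 / βRR))
    (hindep : iIndepFun ![rSR, rSDn, rRDn, rLI, V] P)
    (γc γr δ w an af γthf γthn : ℝ)
    (hγc : 0 < γc) (hγr : 0 < γr) (hδ : δ ∈ Set.Ioc (0 : ℝ) 1) (hw : w = 0 ∨ w = 1)
    (han : 0 < an) (hanf : an < af) (hsum : an + af = 1)
    (hγthf : 0 < γthf) (hγthn : 0 < γthn) (hdec : an * γthf < af)
    -- threshold constants
    (θ₁ θ₂ θ φ₁ φ₂ φ : ℝ)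
    (hθ₁ : θ₁ = γthf / ((af - an * γthf) * γc)) (hθ₂ : θ₂ = γthn / (an * γc))
    (hθ : θ = max θ₁ θ₂)
    (hφ₁ : φ₁ = γthf / ((af - an * γthf) * γr)) (hφ₂ : φ₂ = γthn / (an * γr))
    (hφ : φ = max φ₁ φ₂) :
    -- with I ω = (V ω)² δ γr + rLI ω w γr + 1 :
    -- γ₁ = af rSR γc/(an rSR γc + I), γ₂ = an rSR γc/I,
    -- γ₃ = af rSDn γc/(an rSDn γc + 1), γ₄ = an rSDn γc,
    -- γ₅ = af rRDn γr/(an rRDn γr + 1), γ₆ = an rRDn γr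
    P {ω | min (af * rSR ω * γc /
                  (an * rSR ω * γc + ((V ω) ^ 2 * δ * γr + rLI ω * w * γr + 1)) / γthf)
               (an * rSR ω * γc / ((V ω) ^ 2 * δ * γr + rLI ω * w * γr + 1) / γthn) < 1
         ∧ min (af * rSDn ω * γc / (an * rSDn ω * γc + 1) / γthf)
               (an * rSDn ω * γc / γthn) < 1}
      + P {ω | 1 ≤ min (af * rSR ω * γc /
                  (an * rSR ω * γc + ((V ω) ^ 2 * δ * γr + rLI ω * w * γr + 1)) / γthf)
               (an * rSR ω * γc / ((V ω) ^ 2 * δ * γr + rLI ω * w * γr + 1) / γthn)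
             ∧ min (af * rRDn ω * γr / (an * rRDn ω * γr + 1) / γthf)
                   (an * rRDn ω * γr / γthn) < 1
             ∧ min (af * rSDn ω * γc / (an * rSDn ω * γc + 1) / γthf)
                   (an * rSDn ω * γc / γthn) < 1}
      = ENNReal.ofReal ((1 - Real.exp (-θ / βSDn))
          * (1 - βSR / (2 * βRR * (βSR + βLI * w * γr * θ))
              * Real.sqrt (π * βSR / (δ * γr * θ))
              * Real.exp (βSR / (4 * βRR ^ 2 * δ * γr * θ) - θ / βSR - φ / βRDn)
              * erfc (1 / (2 * βRR) * Real.sqrt (βSR / (δ * γr * θ))))) := by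
  obtain ⟨hδ0, hδ1⟩ := hδ
  have hw0 : (0:ℝ) ≤ w := by rcases hw with h | h <;> simp [h]
  have hdec' : (0:ℝ) < af - an * γthf := by linarith
  have hθ₁pos : 0 < θ₁ := by rw [hθ₁]; positivity
  have hθpos : 0 < θ := hθ ▸ lt_max_of_lt_left hθ₁pos
  have hφ₁pos : 0 < φ₁ := by rw [hφ₁]; positivity
  have hφpos : 0 < φ := hφ ▸ lt_max_of_lt_left hφ₁pos
  -- rates
  have hrs : (0:ℝ) < 1/βSR := by positivity
  have hrd : (0:ℝ) < 1/βSDn := by positivity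
  have hrr : (0:ℝ) < 1/βRDn := by positivity
  have hrl : (0:ℝ) < 1/βLI := by positivity
  have hrv : (0:ℝ) < 1/βRR := by positivity
  -- the events
  set I : Ω → ℝ := fun ω => (V ω)^2*δ*γr + rLI ω*w*γr + 1 with hI
  set EF : Set Ω := {ω | rSR ω < θ * I ω} with hEF
  set EB : Set Ω := {ω | rSDn ω < θ} with hEB
  set EC : Set Ω := {ω | rRDn ω < φ} with hEC
  -- a.e. nonnegativity
  have haeneg : ∀ (g : Ω → ℝ), Measurable g → Measure.map g P = expMeasure (1/βSR) ∨
      Measure.map g P = expMeasure (1/βSDn) ∨ Measure.map g P = expMeasure (1/βRDn) ∨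
      Measure.map g P = expMeasure (1/βLI) ∨ Measure.map g P = expMeasure (1/βRR) →
      ∀ᵐ ω ∂P, 0 ≤ g ω := by
    intro g hg hlaw
    rw [ae_iff]
    have : {ω | ¬ 0 ≤ g ω} = g ⁻¹' (Iio 0) := by ext ω; simp [not_le]
    rw [this, ← Measure.map_apply hg measurableSet_Iio]
    rcases hlaw with h | h | h | h | h <;> rw [h] <;> exact expMeasure_Iio_zero
  have haeSR := haeneg rSR hrSR (Or.inl hlawSR)
  have haeSDn := haeneg rSDn hrSDn (Or.inr (Or.inl hlawSDn))
  have haeRDn := haeneg rRDn hrRDn (Or.inr (Or.inr (Or.inl hlawRDn)))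
  have haeLI := haeneg rLI hrLI (Or.inr (Or.inr (Or.inr (Or.inl hlawLI))))
  have hIpos : ∀ ω, 0 ≤ rLI ω → 0 < I ω := by
    intro ω h
    have h1 : 0 ≤ (V ω)^2*δ*γr := by positivity
    have h2 : 0 ≤ rLI ω*w*γr := by positivity
    simp only [hI]; nlinarith
  -- rewrite the two events a.e.
  have hset1 : P {ω | min (af * rSR ω * γc /
                  (an * rSR ω * γc + ((V ω) ^ 2 * δ * γr + rLI ω * w * γr + 1)) / γthf)
               (an * rSR ω * γc / ((V ω) ^ 2 * δ * γr + rLI ω * w * γr + 1) / γthn) < 1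
         ∧ min (af * rSDn ω * γc / (an * rSDn ω * γc + 1) / γthf)
               (an * rSDn ω * γc / γthn) < 1} = P (EF ∩ EB) := by
    apply measure_congr
    apply Filter.eventuallyEq_set.2
    filter_upwards [haeSR, haeSDn, haeLI] with ω h1 h2 h4
    have hIω := hIpos ω h4
    have e1 := outage_iff hγc han hγthf hγthn hdec' h1 hIω
    have e2 := outage_iff hγc han hγthf hγthn hdec' (I := 1) h2 one_pos
    rw [div_one, mul_one] at e2
    simp only [Set.mem_setOf_eq, Set.mem_inter_iff, hEF, hEB, Set.mem_setOf_eq]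
    rw [e1, e2, ← hθ₁, ← hθ₂, ← hθ]
  have hset2 : P {ω | 1 ≤ min (af * rSR ω * γc /
                  (an * rSR ω * γc + ((V ω) ^ 2 * δ * γr + rLI ω * w * γr + 1)) / γthf)
               (an * rSR ω * γc / ((V ω) ^ 2 * δ * γr + rLI ω * w * γr + 1) / γthn)
             ∧ min (af * rRDn ω * γr / (an * rRDn ω * γr + 1) / γthf)
                   (an * rRDn ω * γr / γthn) < 1
             ∧ min (af * rSDn ω * γc / (an * rSDn ω * γc + 1) / γthf)
                   (an * rSDn ω * γc / γthn) < 1} = P (EFᶜ ∩ (EC ∩ EB)) := by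
    apply measure_congr
    apply Filter.eventuallyEq_set.2
    filter_upwards [haeSR, haeSDn, haeRDn, haeLI] with ω h1 h2 h3 h4
    have hIω := hIpos ω h4
    have e1 := outage_iff hγc han hγthf hγthn hdec' h1 hIω
    have e2 := outage_iff hγc han hγthf hγthn hdec' (I := 1) h2 one_pos
    rw [div_one, mul_one] at e2
    have e3 := outage_iff hγr han hγthf hγthn hdec' (I := 1) h3 one_pos
    rw [div_one, mul_one] at e3
    simp only [Set.mem_setOf_eq, Set.mem_inter_iff, Set.mem_compl_iff, hEF, hEB, hEC]
    simp only [hI] at e1 ⊢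
    rw [← hθ₁, ← hθ₂, ← hθ] at e1 e2
    rw [← hφ₁, ← hφ₂, ← hφ] at e3
    rw [← e2, ← e3, ← e1, not_lt]
  rw [hset1, hset2]
  -- instances
  haveI iS := isProbabilityMeasure_expMeasure hrs
  haveI iD := isProbabilityMeasure_expMeasure hrd
  haveI iR := isProbabilityMeasure_expMeasure hrr
  haveI iL := isProbabilityMeasure_expMeasure hrl
  haveI iV := isProbabilityMeasure_expMeasure hrv
  have hm : ∀ i, Measurable (![rSR, rSDn, rRDn, rLI, V] i) := by
    intro i; fin_cases i <;> assumption
  set U : Ω → (ℝ × ℝ) × ℝ := fun ω => ((rLI ω, V ω), rSR ω) with hU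
  have hUm : Measurable U := (hrLI.prodMk hV).prodMk hrSR
  set SG : Set ((ℝ × ℝ) × ℝ) := {p | p.2 < θ * (p.1.2^2*δ*γr + p.1.1*w*γr + 1)} with hSG
  have htm : Measurable (fun p : (ℝ × ℝ) × ℝ => θ * (p.1.2^2*δ*γr + p.1.1*w*γr + 1)) := by
    fun_prop
  have hSGm : MeasurableSet SG := measurableSet_lt measurable_snd htm
  have hEFU : EF = U ⁻¹' SG := rfl
  have hEFm : MeasurableSet EF := hEFU ▸ hUm hSGm
  -- independence
  have hIndep1 : IndepFun U rSDn P := by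
    have h := hindep.indepFun_finset {0, 3, 4} {1} (by decide) hm
    exact h.comp
      (((measurable_pi_apply (⟨3, by decide⟩ : ({0,3,4} : Finset (Fin 5)))).prodMk
        (measurable_pi_apply ⟨4, by decide⟩)).prodMk (measurable_pi_apply ⟨0, by decide⟩))
      (measurable_pi_apply (⟨1, by decide⟩ : ({1} : Finset (Fin 5))))
  have hIndep2 : IndepFun U (fun ω => (rRDn ω, rSDn ω)) P := by
    have h := hindep.indepFun_finset {0, 3, 4} {1, 2} (by decide) hm
    exact h.comp
      (((measurable_pi_apply (⟨3, by decide⟩ : ({0,3,4} : Finset (Fin 5)))).prodMk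
        (measurable_pi_apply ⟨4, by decide⟩)).prodMk (measurable_pi_apply ⟨0, by decide⟩))
      ((measurable_pi_apply (⟨2, by decide⟩ : ({1,2} : Finset (Fin 5)))).prodMk
        (measurable_pi_apply ⟨1, by decide⟩))
  have hIndep3 : IndepFun rRDn rSDn P := hindep.indepFun (show (2:Fin 5) ≠ 1 by decide)
  have hIndepLV : IndepFun rLI V P := hindep.indepFun (show (3:Fin 5) ≠ 4 by decide)
  have hIndepLV_S : IndepFun (fun ω => (rLI ω, V ω)) rSR P :=
    hindep.indepFun_prodMk hm 3 4 0 (by decide) (by decide)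
  -- laws
  have hlawLV : Measure.map (fun ω => (rLI ω, V ω)) P
      = (expMeasure (1/βLI)).prod (expMeasure (1/βRR)) := by
    rw [(indepFun_iff_map_prod_eq_prod_map_map hrLI.aemeasurable hV.aemeasurable).1 hIndepLV,
      hlawLI, hlawV]
  have hlawU : Measure.map U P
      = ((expMeasure (1/βLI)).prod (expMeasure (1/βRR))).prod (expMeasure (1/βSR)) := by
    rw [hU, (indepFun_iff_map_prod_eq_prod_map_map (hrLI.prodMk hV).aemeasurable
      hrSR.aemeasurable).1 hIndepLV_S, hlawLV, hlawSR]
  -- probability of EB and EC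
  have hPB : P EB = ENNReal.ofReal (1 - Real.exp (-θ / βSDn)) := by
    have hh : EB = rSDn ⁻¹' (Iio θ) := rfl
    rw [hh, ← Measure.map_apply hrSDn measurableSet_Iio, hlawSDn, expMeasure_Iio hrd hθpos.le,
      show -(1/βSDn*θ) = -θ/βSDn by ring]
  have hPC : P EC = ENNReal.ofReal (1 - Real.exp (-φ / βRDn)) := by
    have hh : EC = rRDn ⁻¹' (Iio φ) := rfl
    rw [hh, ← Measure.map_apply hrRDn measurableSet_Iio, hlawRDn, expMeasure_Iio hrr hφpos.le,
      show -(1/βRDn*φ) = -φ/βRDn by ring]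
  -- probability of EFᶜ
  set c : ℝ := δ*γr*θ/βSR with hc
  have hcpos : 0 < c := by rw [hc]; positivity
  set c₁ : ℝ := w*γr*θ/βSR with hc₁
  have hc₁0 : 0 ≤ c₁ := by rw [hc₁]; positivity
  have hscpos : 0 < Real.sqrt c := Real.sqrt_pos.2 hcpos
  set K : ℝ := Real.exp (-(1/βSR*θ)) * ((1/βLI)/(1/βLI + c₁))
      * ((1/βRR) * Real.exp ((1/βRR)^2/(4*c)) * (Real.sqrt π/(2*Real.sqrt c))
        * erfc ((1/βRR)/(2*Real.sqrt c))) with hK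
  set ν : Measure (ℝ × ℝ) := (expMeasure (1/βLI)).prod (expMeasure (1/βRR)) with hν
  have hPFc : P EFᶜ = ENNReal.ofReal K := by
    have hcompl : EFᶜ = U ⁻¹' SGᶜ := by rw [hEFU]; rfl
    rw [hcompl, ← Measure.map_apply hUm hSGm.compl, hlawU, Measure.prod_apply hSGm.compl]
    have hsec : ∀ q : ℝ × ℝ, (Prod.mk q ⁻¹' SGᶜ) = Ici (θ * (q.2^2*δ*γr + q.1*w*γr + 1)) := by
      intro q; ext s; simp [hSG, not_lt]
    rw [lintegral_congr (fun q => by rw [hsec q])]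
    have haeq : ∀ᵐ q ∂ν, 0 ≤ q.1 := by
      rw [ae_iff]
      have hh : {q : ℝ × ℝ | ¬ 0 ≤ q.1} = (Iio 0) ×ˢ (univ : Set ℝ) := by
        ext q; simp [not_le]
      rw [hν, hh, Measure.prod_prod, expMeasure_Iio_zero, zero_mul]
    have hcongr : ∫⁻ q, expMeasure (1/βSR) (Ici (θ * (q.2^2*δ*γr + q.1*w*γr + 1))) ∂ν
        = ∫⁻ q, ENNReal.ofReal (Real.exp (-(1/βSR*θ)))
            * (ENNReal.ofReal (Real.exp (-(c₁*q.1))) * ENNReal.ofReal (Real.exp (-(c*q.2^2)))) ∂ν := by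
      apply lintegral_congr_ae
      filter_upwards [haeq] with q hq
      have ht0 : 0 ≤ θ * (q.2^2*δ*γr + q.1*w*γr + 1) := by
        have h1 : 0 ≤ q.2^2*δ*γr := by positivity
        have h2 : 0 ≤ q.1*w*γr := by positivity
        nlinarith
      rw [expMeasure_Ici hrs ht0, ← ENNReal.ofReal_mul (Real.exp_pos _).le,
        ← ENNReal.ofReal_mul (Real.exp_pos _).le, ← Real.exp_add, ← Real.exp_add]
      congr 2
      rw [hc, hc₁]
      field_simp
      ring
    rw [hcongr, lintegral_const_mul _ (by fun_prop),
      lintegral_prod_mul (f := fun l => ENNReal.ofReal (Real.exp (-(c₁*l))))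
        (g := fun v => ENNReal.ofReal (Real.exp (-(c*v^2)))) (by fun_prop) (by fun_prop),
      lint_exp_lin hrl hc₁0, lint_exp_sq hrv hcpos,
      ← ENNReal.ofReal_mul (by positivity), ← ENNReal.ofReal_mul (Real.exp_pos _).le]
    rw [hK]
    congr 1
    ring
  -- K bounds
  have hK0 : 0 ≤ K := by
    rw [hK]
    have h1 := erfc_nonneg ((1/βRR)/(2*Real.sqrt c))
    have h2 : (0:ℝ) < 1/βLI + c₁ := by linarith
    positivity
  have hK1 : K ≤ 1 := by
    have hle : P EFᶜ ≤ 1 := prob_le_one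
    rw [hPFc] at hle
    exact (ENNReal.ofReal_le_one).1 hle
  have hPF : P EF = 1 - ENNReal.ofReal K := by
    have h := measure_compl hEFm (measure_ne_top P EF)
    rw [measure_univ, hPFc] at h
    rw [← ENNReal.sub_sub_cancel ENNReal.one_ne_top prob_le_one, h]
  -- independence splits
  have hPr1 : P (EF ∩ EB) = P EF * P EB :=
    (indepFun_iff_measure_inter_preimage_eq_mul.1 hIndep1) SG (Iio θ) hSGm measurableSet_Iio
  have hPr2 : P (EFᶜ ∩ (EC ∩ EB)) = P EFᶜ * P (EC ∩ EB) :=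
    (indepFun_iff_measure_inter_preimage_eq_mul.1 hIndep2) SGᶜ ((Iio φ) ×ˢ (Iio θ))
      hSGm.compl (measurableSet_Iio.prod measurableSet_Iio)
  have hPr3 : P (EC ∩ EB) = P EC * P EB :=
    (indepFun_iff_measure_inter_preimage_eq_mul.1 hIndep3) (Iio φ) (Iio θ)
      measurableSet_Iio measurableSet_Iio
  rw [hPr1, hPr2, hPr3, hPB, hPC, hPF, hPFc]
  -- final arithmetic
  have hexpB : Real.exp (-θ / βSDn) ≤ 1 := by
    apply Real.exp_le_one_iff.2; rw [neg_div]
    have : 0 ≤ θ / βSDn := by positivity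
    linarith
  have hexpC : Real.exp (-φ / βRDn) ≤ 1 := by
    apply Real.exp_le_one_iff.2; rw [neg_div]
    have : 0 ≤ φ / βRDn := by positivity
    linarith
  have hb0 : 0 ≤ 1 - Real.exp (-θ / βSDn) := by linarith
  have hcv0 : 0 ≤ 1 - Real.exp (-φ / βRDn) := by linarith
  have hsub : (1:ENNReal) - ENNReal.ofReal K = ENNReal.ofReal (1 - K) := by
    rw [ENNReal.ofReal_sub _ hK0, ENNReal.ofReal_one]
  rw [hsub]
  rw [← ENNReal.ofReal_mul (by linarith : (0:ℝ) ≤ 1 - K), ← ENNReal.ofReal_mul hcv0,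
    ← ENNReal.ofReal_mul hK0, ← ENNReal.ofReal_add (by nlinarith) (by positivity)]
  congr 1
  -- now a real identity
  have hQ : K * Real.exp (-φ/βRDn)
      = βSR / (2 * βRR * (βSR + βLI * w * γr * θ))
          * Real.sqrt (π * βSR / (δ * γr * θ))
          * Real.exp (βSR / (4 * βRR ^ 2 * δ * γr * θ) - θ / βSR - φ / βRDn)
          * erfc (1 / (2 * βRR) * Real.sqrt (βSR / (δ * γr * θ))) := by
    have hinv : βSR/(δ*γr*θ) = c⁻¹ := by rw [hc]; field_simp
    have harg : 1 / (2 * βRR) * Real.sqrt (βSR / (δ * γr * θ))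
        = (1/βRR)/(2*Real.sqrt c) := by
      rw [hinv, Real.sqrt_inv]; field_simp
    have hsqrtpi : Real.sqrt (π * βSR / (δ * γr * θ))
        = Real.sqrt π * (Real.sqrt c)⁻¹ := by
      rw [mul_div_assoc, hinv, Real.sqrt_mul Real.pi_pos.le, Real.sqrt_inv]
    have hexp : Real.exp (βSR / (4 * βRR ^ 2 * δ * γr * θ) - θ / βSR - φ / βRDn)
        = Real.exp (-(1/βSR*θ)) * Real.exp ((1/βRR)^2/(4*c)) * Real.exp (-φ/βRDn) := by
      rw [← Real.exp_add, ← Real.exp_add]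
      congr 1
      rw [hc]
      field_simp
      ring
    have hKL : (1/βLI)/(1/βLI + c₁) = βSR / (βSR + βLI * w * γr * θ) := by
      rw [hc₁]
      rw [div_eq_div_iff (by positivity) (by positivity)]
      field_simp
    rw [harg, hsqrtpi, hexp, hK, hKL]
    have hD : βSR + βLI * w * γr * θ ≠ 0 := by positivity
    field_simp
  rw [← hQ]
  ring

end Main
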